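/- Let n ≥ 1 and let (q_α)_{α∈ℕ₀ⁿ} be polynomials in ℝ[x₁,…,xₙ], and let T : ℝ[x₁,…,xₙ] → ℝ[x₁,…,xₙ] be the linear map Tp = Σ_α q_α·∂^α p. Then the following are equivalent: (i) deg q_α ≤ |α| for all α ∈ ℕ₀ⁿ; (ii) T maps ℝ[x₁,…,xₙ]_{≤d} into ℝ[x₁,…,xₙ]_{≤d} for every d ∈ ℕ₀. -/

import Mathlib

open MeasureTheory MvPolynomial Filter Topology

/-- The iterated partial derivative `∂^α` on `ℝ[x₁,…,xₙ]`. -/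
noncomputable def pd (n : ℕ) (α : Fin n →₀ ℕ) :
    MvPolynomial (Fin n) ℝ →ₗ[ℝ] MvPolynomial (Fin n) ℝ :=
  (List.ofFn (fun i : Fin n =>
    (((MvPolynomial.pderiv i).toLinearMap : Module.End ℝ (MvPolynomial (Fin n) ℝ)) ^ (α i)))).prod

/-- The multi-factorial `α! = α₁!⋯αₙ!`. -/
def mfact (n : ℕ) (α : Fin n →₀ ℕ) : ℕ := ∏ i, Nat.factorial (α i)

/-- The monomial function `x ↦ x^α`. -/
def monomialFn (n : ℕ) (α : Fin n →₀ ℕ) : (Fin n → ℝ) → ℝ := fun x => ∏ i, x i ^ α i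

/-- `s` is a `K`-moment sequence: there is a measure supported in `K` whose moments are `s`. -/
def IsMomentSeqOn (n : ℕ) (K : Set (Fin n → ℝ)) (s : (Fin n →₀ ℕ) → ℝ) : Prop :=
  ∃ μ : Measure (Fin n → ℝ), μ Kᶜ = 0 ∧
    ∀ α : Fin n →₀ ℕ, Integrable (monomialFn n α) μ ∧ (∫ x, monomialFn n α x ∂μ) = s α

/-- `Pos(K)`, the polynomials nonnegative on `K`. -/
def PosOn (n : ℕ) (K : Set (Fin n → ℝ)) : Set (MvPolynomial (Fin n) ℝ) :=
  {f | ∀ x ∈ K, 0 ≤ MvPolynomial.eval x f}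

/-- The operator `T = Σ_α q_α ∂^α` applied to `p` (the sum is finite since `∂^α p = 0`
for `|α| > deg p`). -/
noncomputable def applyOp (n : ℕ) (q : (Fin n →₀ ℕ) → MvPolynomial (Fin n) ℝ)
    (p : MvPolynomial (Fin n) ℝ) : MvPolynomial (Fin n) ℝ :=
  ∑ᶠ α : Fin n →₀ ℕ, q α * pd n α p

/-- `K^♯ = {x : x + K ⊆ K}`. -/
def Ksharp (n : ℕ) (K : Set (Fin n → ℝ)) : Set (Fin n → ℝ) :=
  {x | ∀ y ∈ K, x + y ∈ K}

/-- `D(s) = Σ_α (s_α/α!) ∂^α` applied to `p`. -/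
noncomputable def applyD (n : ℕ) (s : (Fin n →₀ ℕ) → ℝ) (p : MvPolynomial (Fin n) ℝ) :
    MvPolynomial (Fin n) ℝ :=
  ∑ᶠ α : Fin n →₀ ℕ, (s α / (mfact n α : ℝ)) • pd n α p

/-- The exponential of an endomorphism of a finite-dimensional real vector space,
defined via the matrix exponential in a basis. -/
noncomputable def expEnd {M : Type*} [AddCommGroup M] [Module ℝ M] [FiniteDimensional ℝ M]
    (f : M →ₗ[ℝ] M) : M →ₗ[ℝ] M :=
  letI : DecidableEq (Module.Basis.ofVectorSpaceIndex ℝ M) := Classical.decEq _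
  (Matrix.toLin (Module.Basis.ofVectorSpace ℝ M) (Module.Basis.ofVectorSpace ℝ M))
    (NormedSpace.exp
      ((LinearMap.toMatrix (Module.Basis.ofVectorSpace ℝ M) (Module.Basis.ofVectorSpace ℝ M)) f))


lemma pow_pderiv_monomial {n : ℕ} (i : Fin n) (k : ℕ) (β : Fin n →₀ ℕ) (c : ℝ) :
    (((MvPolynomial.pderiv i).toLinearMap : Module.End ℝ (MvPolynomial (Fin n) ℝ)) ^ k)
      (monomial β c) = monomial (β - Finsupp.single i k) (c * (β i).descFactorial k) := by
  induction k with
  | zero => simp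
  | succ k ih =>
    rw [pow_succ', Module.End.mul_apply, ih]
    rw [Derivation.coeFn_coe, pderiv_monomial]
    have h1 : β - Finsupp.single i k - Finsupp.single i 1 = β - Finsupp.single i (k + 1) := by
      rw [tsub_tsub, ← Finsupp.single_add]
    have h2 : (β - Finsupp.single i k) i = β i - k := by
      simp [Finsupp.tsub_apply]
    rw [h1, h2, Nat.descFactorial_succ, Nat.cast_mul]
    ring_nf

lemma pd_list_monomial {n : ℕ} (α : Fin n →₀ ℕ) (β : Fin n →₀ ℕ) (c : ℝ)
    (l : List (Fin n)) (hl : l.Nodup) :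
    ((l.map (fun i : Fin n =>
      (((MvPolynomial.pderiv i).toLinearMap : Module.End ℝ (MvPolynomial (Fin n) ℝ)) ^ (α i)))).prod)
      (monomial β c) =
    monomial (β - ∑ i ∈ l.toFinset, Finsupp.single i (α i))
      (c * ∏ i ∈ l.toFinset, (β i).descFactorial (α i)) := by
  induction l with
  | nil => simp
  | cons a l ih =>
    have hna : a ∉ l := (List.nodup_cons.mp hl).1
    have hnd : l.Nodup := (List.nodup_cons.mp hl).2
    rw [List.map_cons, List.prod_cons, Module.End.mul_apply, ih hnd, pow_pderiv_monomial]
    have hmem : a ∉ l.toFinset := by simpa using hna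
    have hS : ((β - ∑ i ∈ l.toFinset, Finsupp.single i (α i)) a) = β a := by
      rw [Finsupp.tsub_apply, Finsupp.finset_sum_apply]
      rw [Finset.sum_eq_zero (fun i hi => Finsupp.single_eq_of_ne (by rintro rfl; exact hmem hi))]
      simp
    rw [hS, List.toFinset_cons, Finset.sum_insert hmem, Finset.prod_insert hmem]
    rw [tsub_tsub, add_comm]
    push_cast
    ring_nf

lemma pd_monomial {n : ℕ} (α β : Fin n →₀ ℕ) (c : ℝ) :
    pd n α (monomial β c) =
      monomial (β - α) (c * ∏ i, (β i).descFactorial (α i)) := by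
  rw [pd, List.ofFn_eq_map]
  rw [pd_list_monomial α β c _ (List.nodup_finRange n)]
  rw [List.toFinset_finRange]
  rw [Finsupp.univ_sum_single]

lemma coeff_pd {n : ℕ} (α γ : Fin n →₀ ℕ) (p : MvPolynomial (Fin n) ℝ) :
    coeff γ (pd n α p) = coeff (γ + α) p * ∏ i, ((γ + α) i).descFactorial (α i) := by
  induction p using MvPolynomial.induction_on' with
  | add p q hp hq => simp [map_add, coeff_add, hp, hq, add_mul]
  | monomial β c =>
    rw [pd_monomial, coeff_monomial, coeff_monomial]
    by_cases hab : α ≤ β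
    · by_cases hb : β = γ + α
      · subst hb
        rw [if_pos (by simp), if_pos rfl]
      · rw [if_neg hb, if_neg, zero_mul]
        intro h
        exact hb (by rw [← h, tsub_add_cancel_of_le hab])
    · have hD : (∏ i, (β i).descFactorial (α i)) = 0 := by
        rw [Finsupp.le_iff] at hab
        push_neg at hab
        obtain ⟨i, _, hi⟩ := hab
        exact Finset.prod_eq_zero (Finset.mem_univ i) (Nat.descFactorial_eq_zero_iff_lt.mpr hi)
      have hb : β ≠ γ + α := by rintro rfl; exact hab le_add_self
      rw [if_neg hb, hD, Nat.cast_zero, mul_zero, zero_mul, ite_self]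

lemma sum_eq_totalDegree {n : ℕ} {p : MvPolynomial (Fin n) ℝ} {γ : Fin n →₀ ℕ}
    (h : γ ∈ p.support) : (∑ i, γ i) ≤ p.totalDegree := by
  have := MvPolynomial.le_totalDegree h
  rwa [Finsupp.sum_fintype _ _ (fun _ => rfl)] at this

lemma deg_pd {n : ℕ} (α : Fin n →₀ ℕ) (p : MvPolynomial (Fin n) ℝ)
    (h : pd n α p ≠ 0) : (pd n α p).totalDegree + (∑ i, α i) ≤ p.totalDegree := by
  obtain ⟨γ, hγ, hdeg⟩ := Finset.exists_mem_eq_sup _ (MvPolynomial.support_nonempty.mpr h)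
    (fun s => s.sum fun _ e => e)
  have hc : coeff (γ + α) p ≠ 0 := by
    intro h0
    have := coeff_pd α γ p
    rw [h0, zero_mul] at this
    exact (MvPolynomial.mem_support_iff.mp hγ) this
  have h2 : (∑ i, (γ + α) i) ≤ p.totalDegree :=
    sum_eq_totalDegree (MvPolynomial.mem_support_iff.mpr hc)
  have h3 : (pd n α p).totalDegree = ∑ i, γ i := by
    rw [MvPolynomial.totalDegree, hdeg, Finsupp.sum_fintype _ _ (fun _ => rfl)]
  rw [h3]
  calc (∑ i, γ i) + ∑ i, α i = ∑ i, (γ + α) i := by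
        rw [← Finset.sum_add_distrib]; rfl
    _ ≤ _ := h2

/-- Lemma `degreePreserving`: `T = Σ_α q_α ∂^α` maps each
`ℝ[x₁,…,xₙ]_{≤d}` into itself iff `deg q_α ≤ |α|` for all `α`. -/
theorem stmt4 (n : ℕ) (hn : 1 ≤ n) (q : (Fin n →₀ ℕ) → MvPolynomial (Fin n) ℝ) :
    (∀ α : Fin n →₀ ℕ, (q α).totalDegree ≤ ∑ i, α i) ↔
      ∀ d : ℕ, ∀ p : MvPolynomial (Fin n) ℝ, p.totalDegree ≤ d →
        (applyOp n q p).totalDegree ≤ d := by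
  constructor
  · intro H d p hp
    rw [applyOp]
    have hsub : (Function.support fun α => q α * pd n α p) ⊆
        ↑(Finset.Iic (Finsupp.equivFunOnFinite.symm (fun _ : Fin n => d))) := by
      intro α hα
      simp only [Function.mem_support] at hα
      have hpd : pd n α p ≠ 0 := fun h0 => hα (by rw [h0, mul_zero])
      have h1 := deg_pd α p hpd
      have h2 : ∑ i, α i ≤ d := le_trans (le_trans le_add_self h1) hp
      simp only [Finset.coe_Iic, Set.mem_Iic]
      rw [Finsupp.le_iff]
      intro i _
      have h3 : α i ≤ ∑ j, α j :=
        Finset.single_le_sum (fun j _ => Nat.zero_le _) (Finset.mem_univ i)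
      exact le_trans (le_trans h3 h2) (le_of_eq rfl)
    rw [finsum_eq_sum_of_support_subset _ hsub]
    apply MvPolynomial.totalDegree_finsetSum_le
    intro α _
    by_cases hpd : pd n α p = 0
    · rw [hpd, mul_zero, MvPolynomial.totalDegree_zero]
      exact Nat.zero_le _
    · have h1 := deg_pd α p hpd
      calc (q α * pd n α p).totalDegree
          ≤ (q α).totalDegree + (pd n α p).totalDegree := MvPolynomial.totalDegree_mul _ _
        _ ≤ (∑ i, α i) + (pd n α p).totalDegree := Nat.add_le_add_right (H α) _
        _ ≤ p.totalDegree := by omega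
        _ ≤ d := hp
  · intro H
    have key : ∀ N : ℕ, ∀ α : Fin n →₀ ℕ, (∑ i, α i) = N →
        (q α).totalDegree ≤ ∑ i, α i := by
      intro N
      induction N using Nat.strong_induction_on with
      | _ N IH =>
        intro α hα
        set p := monomial α (1:ℝ) with hp
        have hdp : p.totalDegree = ∑ i, α i := by
          rw [hp, MvPolynomial.totalDegree_monomial _ one_ne_zero,
            Finsupp.sum_fintype _ _ fun _ => rfl]
        have h1 : (applyOp n q p).totalDegree ≤ N := H N p (by rw [hdp, hα])
        have hsub : (Function.support fun β => q β * pd n β p) ⊆ ↑(Finset.Iic α) := by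
          intro β hβ
          simp only [Function.mem_support] at hβ
          have hpd : pd n β p ≠ 0 := fun h0 => hβ (by rw [h0, mul_zero])
          rw [hp, pd_monomial] at hpd
          have hD : (∏ i, (α i).descFactorial (β i)) ≠ 0 := by
            intro h0
            apply hpd
            rw [h0]
            simp
          simp only [Finset.coe_Iic, Set.mem_Iic]
          rw [Finsupp.le_iff]
          intro i _
          by_contra hlt
          push_neg at hlt
          exact hD (Finset.prod_eq_zero (Finset.mem_univ i)
            (Nat.descFactorial_eq_zero_iff_lt.mpr hlt))
        have hsum : applyOp n q p = ∑ β ∈ Finset.Iic α, q β * pd n β p :=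
          finsum_eq_sum_of_support_subset _ hsub
        have hmem : α ∈ Finset.Iic α := Finset.mem_Iic.mpr le_rfl
        have hsplit : q α * pd n α p
            = applyOp n q p - ∑ β ∈ (Finset.Iic α).erase α, q β * pd n β p := by
          rw [hsum, ← Finset.add_sum_erase _ _ hmem]
          ring
        have hrest : (∑ β ∈ (Finset.Iic α).erase α, q β * pd n β p).totalDegree ≤ N := by
          apply MvPolynomial.totalDegree_finsetSum_le
          intro β hβ
          have hβle : β ≤ α := Finset.mem_Iic.mp (Finset.mem_of_mem_erase hβ)
          have hβle' : ∀ i, β i ≤ α i := fun i => hβle i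
          have hβne : β ≠ α := Finset.ne_of_mem_erase hβ
          have hex : ∃ i, β i < α i := by
            by_contra hc
            push_neg at hc
            exact hβne (Finsupp.ext fun i => le_antisymm (hβle' i) (hc i))
          obtain ⟨j, hj⟩ := hex
          have hβlt : (∑ i, β i) < N := by
            rw [← hα]
            exact Finset.sum_lt_sum (fun i _ => hβle' i) ⟨j, Finset.mem_univ j, hj⟩
          have hqβ := IH _ hβlt β rfl
          rw [hp, pd_monomial]
          have hmono : (monomial (α - β)
              ((1:ℝ) * ∏ i, (α i).descFactorial (β i))).totalDegree ≤ ∑ i, (α - β) i := by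
            refine le_trans (MvPolynomial.totalDegree_monomial_le _ _) ?_
            rw [Finsupp.sum_fintype _ _ fun _ => rfl]
            simp
          calc (q β * monomial (α - β) ((1:ℝ) * ∏ i, (α i).descFactorial (β i))).totalDegree
              ≤ (q β).totalDegree + _ := MvPolynomial.totalDegree_mul _ _
            _ ≤ (∑ i, β i) + (∑ i, (α - β) i) := add_le_add hqβ hmono
            _ = ∑ i, α i := by
                rw [← Finset.sum_add_distrib]
                exact Finset.sum_congr rfl fun i _ => by
                  have := hβle' i
                  rw [Finsupp.tsub_apply]
                  omega
            _ = N := hα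
        have hqC : q α * pd n α p = ((mfact n α : ℕ) : ℝ) • q α := by
          rw [hp, pd_monomial, tsub_self, one_mul]
          have : (∏ i, (α i).descFactorial (α i)) = mfact n α := by
            rw [mfact]
            exact Finset.prod_congr rfl fun i _ => Nat.descFactorial_self _
          rw [this, ← MvPolynomial.C_mul', MvPolynomial.monomial_zero', mul_comm]
        have hdq : (((mfact n α : ℕ) : ℝ) • q α).totalDegree ≤ N := by
          rw [← hqC, hsplit]
          exact le_trans (MvPolynomial.totalDegree_sub _ _) (max_le h1 hrest)
        have hm : ((mfact n α : ℕ) : ℝ) ≠ 0 := by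
          rw [Nat.cast_ne_zero, mfact]
          exact (Finset.prod_pos fun i _ => Nat.factorial_pos _).ne'
        have hq' : q α = ((mfact n α : ℕ) : ℝ)⁻¹ • (((mfact n α : ℕ) : ℝ) • q α) := by
          rw [smul_smul, inv_mul_cancel₀ hm, one_smul]
        rw [hα]
        calc (q α).totalDegree
            = (((mfact n α : ℕ) : ℝ)⁻¹ • (((mfact n α : ℕ) : ℝ) • q α)).totalDegree := by
              rw [← hq']
          _ ≤ (((mfact n α : ℕ) : ℝ) • q α).totalDegree :=
              MvPolynomial.totalDegree_smul_le _ _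
          _ ≤ N := hdq
    intro α
    exact key _ α rfl
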